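/- For any nonempty set S, the relation ≤ on functional units for S is transitive: for all functional units H, H', H'' for S, if H ≤ H' and H' ≤ H'' then H ≤ H''. -/
import Mathlib


/-- Primitive instructions: plain basic `f.m`, positive test `+f.m`, negative test `-f.m`
(method names are natural numbers, there is a single focus `f`), forward jump `#l`,
backward jump `\l`, and the positive/negative termination instructions `!t` / `!f`. -/
inductive Instr : Type where
  | basic (m : ℕ)
  | postest (m : ℕ)
  | negtest (m : ℕ)
  | fjump (l : ℕ)
  | bjump (l : ℕ)
  | haltT
  | haltF
deriving DecidableEq

/-- A functional unit for a state space `S`: a finite, functional set of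
(method name, method operation) pairs, where a method operation is a total
function `S → Bool × S`. -/
structure FU (S : Type*) where
  carrier : Set (ℕ × (S → Bool × S))
  finite : carrier.Finite
  functional : ∀ {m : ℕ} {M M' : S → Bool × S},
    (m, M) ∈ carrier → (m, M') ∈ carrier → M = M'

/-- The interface of a functional unit: the set of method names occurring in it. -/
def FU.iface {S : Type*} (H : FU S) : Set ℕ := {m | ∃ M, (m, M) ∈ H.carrier}

/-- The method operation named `m` in `H` (an arbitrary fixed value if `m ∉ I(H)`). -/
noncomputable def FU.op {S : Type*} (H : FU S) (m : ℕ) (s : S) : Bool × S :=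
  letI := Classical.propDecidable
  if h : ∃ M, (m, M) ∈ H.carrier then h.choose s else (true, s)

/-- The restriction `⟨I, H⟩` of a functional unit to a set `I` of method names. -/
def FU.restrict {S : Type*} (H : FU S) (I : Set ℕ) : FU S where
  carrier := {p ∈ H.carrier | p.1 ∈ I}
  finite := H.finite.subset (Set.sep_subset _ _)
  functional := fun hM hM' => H.functional hM.1 hM'.1

/-- The method names used by an instruction all belong to `I`. -/
def Instr.namesIn (I : Set ℕ) : Instr → Prop
  | .basic m => m ∈ I
  | .postest m => m ∈ I
  | .negtest m => m ∈ I
  | _ => True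

/-- An instruction sequence over a set `I` of method names: a finite nonempty list of
primitive instructions whose method names belong to `I`. -/
def InstrSeqOver (I : Set ℕ) (x : List Instr) : Prop :=
  x ≠ [] ∧ ∀ u ∈ x, u.namesIn I

/-- `Exec H x i s b s'` : execution of the instruction sequence `x` on the functional
unit `H`, from (0-based) position `i` in state `s`, terminates delivering the Boolean
value `b` with final state `s'`.  (Position `i` here corresponds to the 1-based
position `i+1`; positions outside the sequence, jumps `#0`/`\0`, and infinite
executions admit no derivation, i.e. execution does not terminate.) -/
inductive Exec {S : Type*} (H : FU S) (x : List Instr) : ℕ → S → Bool → S → Prop where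
  | basic {i : ℕ} {s : S} {b : Bool} {s' : S} (m : ℕ)
      (hu : x[i]? = some (Instr.basic m))
      (h : Exec H x (i + 1) (H.op m s).2 b s') : Exec H x i s b s'
  | posT {i : ℕ} {s : S} {b : Bool} {s' : S} (m : ℕ)
      (hu : x[i]? = some (Instr.postest m)) (hr : (H.op m s).1 = true)
      (h : Exec H x (i + 1) (H.op m s).2 b s') : Exec H x i s b s'
  | posF {i : ℕ} {s : S} {b : Bool} {s' : S} (m : ℕ)
      (hu : x[i]? = some (Instr.postest m)) (hr : (H.op m s).1 = false)
      (h : Exec H x (i + 2) (H.op m s).2 b s') : Exec H x i s b s'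
  | negT {i : ℕ} {s : S} {b : Bool} {s' : S} (m : ℕ)
      (hu : x[i]? = some (Instr.negtest m)) (hr : (H.op m s).1 = true)
      (h : Exec H x (i + 2) (H.op m s).2 b s') : Exec H x i s b s'
  | negF {i : ℕ} {s : S} {b : Bool} {s' : S} (m : ℕ)
      (hu : x[i]? = some (Instr.negtest m)) (hr : (H.op m s).1 = false)
      (h : Exec H x (i + 1) (H.op m s).2 b s') : Exec H x i s b s'
  | fjump {i : ℕ} {s : S} {b : Bool} {s' : S} (l : ℕ)
      (hu : x[i]? = some (Instr.fjump l))
      (h : Exec H x (i + l) s b s') : Exec H x i s b s'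
  | bjump {i : ℕ} {s : S} {b : Bool} {s' : S} (l : ℕ)
      (hu : x[i]? = some (Instr.bjump l)) (hl : l ≤ i)
      (h : Exec H x (i - l) s b s') : Exec H x i s b s'
  | haltT {i : ℕ} {s : S} (hu : x[i]? = some Instr.haltT) : Exec H x i s true s
  | haltF {i : ℕ} {s : S} (hu : x[i]? = some Instr.haltF) : Exec H x i s false s

/-- `M` is a derived method operation of `H`: there is an instruction sequence `x`
over `I(H)` whose produced partial method operation `⌈x⌉_H` is total and equals `M`. -/
def DerivedOp {S : Type*} (H : FU S) (M : S → Bool × S) : Prop :=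
  ∃ x : List Instr, InstrSeqOver H.iface x ∧ ∀ s, Exec H x 0 s (M s).1 (M s).2

/-- `H ≤ H'` : every method operation of `H` is a derived method operation of `H'`. -/
def FU.le {S : Type*} (H H' : FU S) : Prop :=
  ∀ m M, (m, M) ∈ H.carrier → DerivedOp H' M

/-- `H ≡ H'` : `H ≤ H'` and `H' ≤ H`. -/
def FU.equiv {S : Type*} (H H' : FU S) : Prop := FU.le H H' ∧ FU.le H' H

/-- A method operation on ℕ is computable if both its components are. -/
def ComputableMO (M : ℕ → Bool × ℕ) : Prop :=
  Computable (fun n => (M n).1) ∧ Computable (fun n => (M n).2)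

/-- A functional unit for ℕ is computable if all its method operations are. -/
def ComputableFU (H : FU ℕ) : Prop :=
  ∀ m M, (m, M) ∈ H.carrier → ComputableMO M

namespace FUTrans

/-- Replace termination instructions by jumps to absolute targets `tT`/`tF`,
given that the instruction sits at absolute position `k`. -/
def tr (tT tF k : ℕ) : Instr → Instr
  | .haltT => .fjump (tT - k)
  | .haltF => .fjump (tF - k)
  | u => u

/-- Map with absolute positions starting at `k`. -/
def mapIdxFrom (f : ℕ → Instr → Instr) : ℕ → List Instr → List Instr
  | _, [] => []
  | k, u :: l => f k u :: mapIdxFrom f (k + 1) l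

lemma mapIdxFrom_length (f : ℕ → Instr → Instr) :
    ∀ (l : List Instr) (k : ℕ), (mapIdxFrom f k l).length = l.length := by
  intro l
  induction l with
  | nil => intro k; rfl
  | cons u t ih => intro k; simp [mapIdxFrom, ih]

lemma mapIdxFrom_getElem? (f : ℕ → Instr → Instr) :
    ∀ (l : List Instr) (k j : ℕ), (mapIdxFrom f k l)[j]? = (l[j]?).map (f (k + j)) := by
  intro l
  induction l with
  | nil => intro k j; simp [mapIdxFrom]
  | cons u t ih =>
    intro k j
    cases j with
    | zero => simp [mapIdxFrom]
    | succ j =>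
      simp only [mapIdxFrom, List.getElem?_cons_succ, ih]
      rw [show k + 1 + j = k + (j + 1) by omega]

lemma mem_mapIdxFrom (f : ℕ → Instr → Instr) :
    ∀ (l : List Instr) (k : ℕ) (v : Instr), v ∈ mapIdxFrom f k l →
      ∃ j w, w ∈ l ∧ v = f j w := by
  intro l
  induction l with
  | nil => intro k v h; simp [mapIdxFrom] at h
  | cons u t ih =>
    intro k v h
    simp only [mapIdxFrom, List.mem_cons] at h
    rcases h with h | h
    · exact ⟨k, u, by simp, h⟩
    · obtain ⟨j, w, hw, hv⟩ := ih (k + 1) v h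
      exact ⟨j, w, by simp [hw], hv⟩

/-- Size of the compiled block for one instruction. -/
def sz (P : ℕ → List Instr) : Instr → ℕ
  | .basic m => (P m).length
  | .postest m => (P m).length
  | .negtest m => (P m).length
  | _ => 1

/-- Compiled position corresponding to source position `j`. -/
def pos (P : ℕ → List Instr) (x : List Instr) (j : ℕ) : ℕ :=
  ((x.take j).map (sz P)).sum

/-- Compiled block for the instruction at source position `j`. -/
def B (P : ℕ → List Instr) (x : List Instr) (j : ℕ) : Instr → List Instr
  | .basic m => mapIdxFrom (tr (pos P x (j+1)) (pos P x (j+1))) (pos P x j) (P m)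
  | .postest m => mapIdxFrom (tr (pos P x (j+1)) (pos P x (j+2))) (pos P x j) (P m)
  | .negtest m => mapIdxFrom (tr (pos P x (j+2)) (pos P x (j+1))) (pos P x j) (P m)
  | .fjump l => [.fjump (pos P x (j+l) - pos P x j)]
  | .bjump l => [.bjump (pos P x j - pos P x (j-l))]
  | .haltT => [.haltT]
  | .haltF => [.haltF]

lemma B_length (P : ℕ → List Instr) (x : List Instr) (j : ℕ) (u : Instr) :
    (B P x j u).length = sz P u := by
  cases u <;> simp [B, sz, mapIdxFrom_length]

/-- The compiled program for the suffix of the source starting at position `j`. -/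
def comp (P : ℕ → List Instr) (x : List Instr) : ℕ → List Instr → List Instr
  | _, [] => []
  | j, u :: rest => B P x j u ++ comp P x (j+1) rest

lemma mem_comp (P : ℕ → List Instr) (x : List Instr) :
    ∀ (l : List Instr) (j : ℕ) (v : Instr), v ∈ comp P x j l →
      ∃ u ∈ l, ∃ j', v ∈ B P x j' u := by
  intro l
  induction l with
  | nil => intro j v h; simp [comp] at h
  | cons u t ih =>
    intro j v h
    simp only [comp, List.mem_append] at h
    rcases h with h | h
    · exact ⟨u, by simp, j, h⟩
    · obtain ⟨w, hw, j', hj'⟩ := ih (j+1) v h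
      exact ⟨w, by simp [hw], j', hj'⟩

lemma comp_getElem? (P : ℕ → List Instr) (x : List Instr) :
    ∀ (l : List Instr) (j m k : ℕ) (v : Instr) (hm : m < l.length),
      (B P x (j + m) l[m])[k]? = some v →
      (comp P x j l)[((l.take m).map (sz P)).sum + k]? = some v := by
  intro l
  induction l with
  | nil => intro j m k v hm; simp at hm
  | cons u t ih =>
    intro j m k v hm hv
    cases m with
    | zero =>
      simp only [Nat.add_zero, List.getElem_cons_zero] at hv
      have hk : k < (B P x j u).length := (List.getElem?_eq_some_iff.mp hv).1
      simp only [comp, List.take_zero, List.map_nil, List.sum_nil, Nat.zero_add]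
      rw [List.getElem?_append, if_pos hk]
      exact hv
    | succ m =>
      simp only [List.length_cons, Nat.succ_lt_succ_iff] at hm
      simp only [List.getElem_cons_succ] at hv
      simp only [comp, List.take_succ_cons, List.map_cons, List.sum_cons]
      have hlen : (B P x j u).length = sz P u := B_length P x j u
      rw [List.getElem?_append_right (by omega)]
      have harith : sz P u + (List.map (sz P) (List.take m t)).sum + k - (B P x j u).length
          = (List.map (sz P) (List.take m t)).sum + k := by omega
      rw [harith]
      exact ih (j+1) m k v hm (by rw [show j + 1 + m = j + (m + 1) by omega]; exact hv)

lemma pos_succ (P : ℕ → List Instr) (x : List Instr) {i : ℕ} (hi : i < x.length) :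
    pos P x (i+1) = pos P x i + sz P x[i] := by
  unfold pos
  rw [List.take_succ, List.getElem?_eq_getElem hi, Option.toList_some,
    List.map_append, List.sum_append]
  simp [sz]

lemma pos_mono (P : ℕ → List Instr) (x : List Instr) {j j' : ℕ} (h : j ≤ j') :
    pos P x j ≤ pos P x j' := by
  unfold pos
  have h1 : x.take j = (x.take j').take j := by
    rw [List.take_take, Nat.min_eq_left h]
  rw [h1]
  conv_rhs => rw [← List.take_append_drop j (x.take j')]
  rw [List.map_append, List.sum_append]
  exact Nat.le_add_right _ _

/-- Inlining correctness: execution of `p` embedded (with translated halts) at offset `o`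
in `big`, continued at `tT`/`tF` according to the delivered value. -/
lemma inline {S : Type*} (H : FU S) (p : List Instr) {i : ℕ} {s : S} {b : Bool} {s' : S}
    (hex : Exec H p i s b s') (o tT tF : ℕ) (big : List Instr)
    (hcopy : ∀ j u, p[j]? = some u → big[o + j]? = some (tr tT tF (o + j) u))
    (hT : o + p.length ≤ tT) (hF : o + p.length ≤ tF) :
    ∀ {c : Bool} {s'' : S}, Exec H big (if b then tT else tF) s' c s'' →
      Exec H big (o + i) s c s'' := by
  induction hex with
  | @basic i s b s' m hu h ih =>
    intro c s'' hcont
    have hb := hcopy i _ hu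
    exact Exec.basic m (by simpa [tr] using hb)
      (by rw [show o + i + 1 = o + (i + 1) by omega]; exact ih hcont)
  | @posT i s b s' m hu hr h ih =>
    intro c s'' hcont
    have hb := hcopy i _ hu
    exact Exec.posT m (by simpa [tr] using hb) hr
      (by rw [show o + i + 1 = o + (i + 1) by omega]; exact ih hcont)
  | @posF i s b s' m hu hr h ih =>
    intro c s'' hcont
    have hb := hcopy i _ hu
    exact Exec.posF m (by simpa [tr] using hb) hr
      (by rw [show o + i + 2 = o + (i + 2) by omega]; exact ih hcont)
  | @negT i s b s' m hu hr h ih =>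
    intro c s'' hcont
    have hb := hcopy i _ hu
    exact Exec.negT m (by simpa [tr] using hb) hr
      (by rw [show o + i + 2 = o + (i + 2) by omega]; exact ih hcont)
  | @negF i s b s' m hu hr h ih =>
    intro c s'' hcont
    have hb := hcopy i _ hu
    exact Exec.negF m (by simpa [tr] using hb) hr
      (by rw [show o + i + 1 = o + (i + 1) by omega]; exact ih hcont)
  | @fjump i s b s' l hu h ih =>
    intro c s'' hcont
    have hb := hcopy i _ hu
    exact Exec.fjump l (by simpa [tr] using hb)
      (by rw [show o + i + l = o + (i + l) by omega]; exact ih hcont)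
  | @bjump i s b s' l hu hl h ih =>
    intro c s'' hcont
    have hb := hcopy i _ hu
    exact Exec.bjump l (by simpa [tr] using hb) (by omega)
      (by rw [show o + i - l = o + (i - l) by omega]; exact ih hcont)
  | @haltT i s hu =>
    intro c s'' hcont
    have hi : i < p.length := (List.getElem?_eq_some_iff.mp hu).1
    have hb := hcopy i _ hu
    simp only [tr] at hb
    refine Exec.fjump (tT - (o + i)) hb ?_
    rw [show o + i + (tT - (o + i)) = tT by omega]
    simpa using hcont
  | @haltF i s hu =>
    intro c s'' hcont
    have hi : i < p.length := (List.getElem?_eq_some_iff.mp hu).1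
    have hb := hcopy i _ hu
    simp only [tr] at hb
    refine Exec.fjump (tF - (o + i)) hb ?_
    rw [show o + i + (tF - (o + i)) = tF by omega]
    simpa using hcont

/-- Main simulation lemma: the compiled program simulates the source. -/
lemma sim {S : Type*} (H' H'' : FU S) (P : ℕ → List Instr) (x : List Instr)
    (hx : ∀ u ∈ x, u.namesIn H'.iface)
    (hP : ∀ m ∈ H'.iface, ∀ s, Exec H'' (P m) 0 s ((H'.op m s).1) ((H'.op m s).2))
    {i : ℕ} {s : S} {b : Bool} {s' : S} (h : Exec H' x i s b s') :
    Exec H'' (comp P x 0 x) (pos P x i) s b s' := by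
  induction h with
  | @basic i s b s' m hu h ih =>
    obtain ⟨hi, hxi⟩ := List.getElem?_eq_some_iff.mp hu
    have hm : m ∈ H'.iface := by
      have := hx _ (List.mem_of_getElem? hu)
      simpa [Instr.namesIn] using this
    have hcopy : ∀ j u, (P m)[j]? = some u →
        (comp P x 0 x)[pos P x i + j]? =
          some (tr (pos P x (i+1)) (pos P x (i+1)) (pos P x i + j) u) := by
      intro j u hju
      have hj : j < (P m).length := (List.getElem?_eq_some_iff.mp hju).1
      refine comp_getElem? P x x 0 i j _ hi ?_
      rw [show (0 : ℕ) + i = i by omega, hxi]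
      simp only [B, mapIdxFrom_getElem?, hju, Option.map_some]
    have hps : pos P x (i+1) = pos P x i + (P m).length := by
      rw [pos_succ P x hi, hxi]; rfl
    have := inline H'' (P m) (hP m hm s) (pos P x i) (pos P x (i+1)) (pos P x (i+1))
      (comp P x 0 x) hcopy (by omega) (by omega) (c := b) (s'' := s')
      (by rw [ite_self]; exact ih)
    simpa using this
  | @posT i s b s' m hu hr h ih =>
    obtain ⟨hi, hxi⟩ := List.getElem?_eq_some_iff.mp hu
    have hm : m ∈ H'.iface := by
      have := hx _ (List.mem_of_getElem? hu)
      simpa [Instr.namesIn] using this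
    have hcopy : ∀ j u, (P m)[j]? = some u →
        (comp P x 0 x)[pos P x i + j]? =
          some (tr (pos P x (i+1)) (pos P x (i+2)) (pos P x i + j) u) := by
      intro j u hju
      refine comp_getElem? P x x 0 i j _ hi ?_
      rw [show (0 : ℕ) + i = i by omega, hxi]
      simp only [B, mapIdxFrom_getElem?, hju, Option.map_some]
    have hps : pos P x (i+1) = pos P x i + (P m).length := by
      rw [pos_succ P x hi, hxi]; rfl
    have hps2 : pos P x (i+1) ≤ pos P x (i+2) := pos_mono P x (by omega)
    have := inline H'' (P m) (hP m hm s) (pos P x i) (pos P x (i+1)) (pos P x (i+2))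
      (comp P x 0 x) hcopy (by omega) (by omega) (c := b) (s'' := s')
      (by rw [hr]; simpa using ih)
    simpa using this
  | @posF i s b s' m hu hr h ih =>
    obtain ⟨hi, hxi⟩ := List.getElem?_eq_some_iff.mp hu
    have hm : m ∈ H'.iface := by
      have := hx _ (List.mem_of_getElem? hu)
      simpa [Instr.namesIn] using this
    have hcopy : ∀ j u, (P m)[j]? = some u →
        (comp P x 0 x)[pos P x i + j]? =
          some (tr (pos P x (i+1)) (pos P x (i+2)) (pos P x i + j) u) := by
      intro j u hju
      refine comp_getElem? P x x 0 i j _ hi ?_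
      rw [show (0 : ℕ) + i = i by omega, hxi]
      simp only [B, mapIdxFrom_getElem?, hju, Option.map_some]
    have hps : pos P x (i+1) = pos P x i + (P m).length := by
      rw [pos_succ P x hi, hxi]; rfl
    have hps2 : pos P x (i+1) ≤ pos P x (i+2) := pos_mono P x (by omega)
    have := inline H'' (P m) (hP m hm s) (pos P x i) (pos P x (i+1)) (pos P x (i+2))
      (comp P x 0 x) hcopy (by omega) (by omega) (c := b) (s'' := s')
      (by rw [hr]; simpa using ih)
    simpa using this
  | @negT i s b s' m hu hr h ih =>
    obtain ⟨hi, hxi⟩ := List.getElem?_eq_some_iff.mp hu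
    have hm : m ∈ H'.iface := by
      have := hx _ (List.mem_of_getElem? hu)
      simpa [Instr.namesIn] using this
    have hcopy : ∀ j u, (P m)[j]? = some u →
        (comp P x 0 x)[pos P x i + j]? =
          some (tr (pos P x (i+2)) (pos P x (i+1)) (pos P x i + j) u) := by
      intro j u hju
      refine comp_getElem? P x x 0 i j _ hi ?_
      rw [show (0 : ℕ) + i = i by omega, hxi]
      simp only [B, mapIdxFrom_getElem?, hju, Option.map_some]
    have hps : pos P x (i+1) = pos P x i + (P m).length := by
      rw [pos_succ P x hi, hxi]; rfl
    have hps2 : pos P x (i+1) ≤ pos P x (i+2) := pos_mono P x (by omega)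
    have := inline H'' (P m) (hP m hm s) (pos P x i) (pos P x (i+2)) (pos P x (i+1))
      (comp P x 0 x) hcopy (by omega) (by omega) (c := b) (s'' := s')
      (by rw [hr]; simpa using ih)
    simpa using this
  | @negF i s b s' m hu hr h ih =>
    obtain ⟨hi, hxi⟩ := List.getElem?_eq_some_iff.mp hu
    have hm : m ∈ H'.iface := by
      have := hx _ (List.mem_of_getElem? hu)
      simpa [Instr.namesIn] using this
    have hcopy : ∀ j u, (P m)[j]? = some u →
        (comp P x 0 x)[pos P x i + j]? =
          some (tr (pos P x (i+2)) (pos P x (i+1)) (pos P x i + j) u) := by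
      intro j u hju
      refine comp_getElem? P x x 0 i j _ hi ?_
      rw [show (0 : ℕ) + i = i by omega, hxi]
      simp only [B, mapIdxFrom_getElem?, hju, Option.map_some]
    have hps : pos P x (i+1) = pos P x i + (P m).length := by
      rw [pos_succ P x hi, hxi]; rfl
    have hps2 : pos P x (i+1) ≤ pos P x (i+2) := pos_mono P x (by omega)
    have := inline H'' (P m) (hP m hm s) (pos P x i) (pos P x (i+2)) (pos P x (i+1))
      (comp P x 0 x) hcopy (by omega) (by omega) (c := b) (s'' := s')
      (by rw [hr]; simpa using ih)
    simpa using this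
  | @fjump i s b s' l hu h ih =>
    obtain ⟨hi, hxi⟩ := List.getElem?_eq_some_iff.mp hu
    have hlook : (comp P x 0 x)[pos P x i + 0]? =
        some (Instr.fjump (pos P x (i+l) - pos P x i)) := by
      refine comp_getElem? P x x 0 i 0 _ hi ?_
      rw [show (0 : ℕ) + i = i by omega, hxi]
      rfl
    have hmono : pos P x i ≤ pos P x (i+l) := pos_mono P x (by omega)
    refine Exec.fjump _ (by simpa using hlook) ?_
    rw [show pos P x i + (pos P x (i+l) - pos P x i) = pos P x (i+l) by omega]
    exact ih
  | @bjump i s b s' l hu hl h ih =>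
    obtain ⟨hi, hxi⟩ := List.getElem?_eq_some_iff.mp hu
    have hlook : (comp P x 0 x)[pos P x i + 0]? =
        some (Instr.bjump (pos P x i - pos P x (i-l))) := by
      refine comp_getElem? P x x 0 i 0 _ hi ?_
      rw [show (0 : ℕ) + i = i by omega, hxi]
      rfl
    have hmono : pos P x (i-l) ≤ pos P x i := pos_mono P x (by omega)
    refine Exec.bjump _ (by simpa using hlook) (by omega) ?_
    rw [show pos P x i - (pos P x i - pos P x (i-l)) = pos P x (i-l) by omega]
    exact ih
  | @haltT i s hu =>
    obtain ⟨hi, hxi⟩ := List.getElem?_eq_some_iff.mp hu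
    have hlook : (comp P x 0 x)[pos P x i + 0]? = some Instr.haltT := by
      refine comp_getElem? P x x 0 i 0 _ hi ?_
      rw [show (0 : ℕ) + i = i by omega, hxi]
      rfl
    exact Exec.haltT (by simpa using hlook)
  | @haltF i s hu =>
    obtain ⟨hi, hxi⟩ := List.getElem?_eq_some_iff.mp hu
    have hlook : (comp P x 0 x)[pos P x i + 0]? = some Instr.haltF := by
      refine comp_getElem? P x x 0 i 0 _ hi ?_
      rw [show (0 : ℕ) + i = i by omega, hxi]
      rfl
    exact Exec.haltF (by simpa using hlook)

lemma tr_namesIn {I : Set ℕ} (a b k : ℕ) {w : Instr} (h : w.namesIn I) :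
    (tr a b k w).namesIn I := by
  cases w <;> simpa [tr, Instr.namesIn] using h

end FUTrans

/-- For any nonempty set `S`, the relation `≤` on functional units for `S` is
transitive. -/
theorem le_trans_fu {S : Type*} [Nonempty S] (H H' H'' : FU S)
    (h1 : FU.le H H') (h2 : FU.le H' H'') : FU.le H H'' := by
  classical
  intro m M hmem
  obtain ⟨x, ⟨hxne, hxnames⟩, hxex⟩ := h1 m M hmem
  -- derived programs for the operations of `H'` over `H''`
  have hder : ∀ n ∈ H'.iface, DerivedOp H'' (H'.op n) := by
    intro n hn
    obtain ⟨M', hM'⟩ := hn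
    have hop : H'.op n = M' := by
      funext s
      unfold FU.op
      rw [dif_pos ⟨M', hM'⟩]
      have := H'.functional (Exists.choose_spec (⟨M', hM'⟩ : ∃ N, (n, N) ∈ H'.carrier)) hM'
      rw [this]
    rw [hop]
    exact h2 n M' hM'
  set P : ℕ → List Instr := fun n =>
    if h : DerivedOp H'' (H'.op n) then h.choose else [Instr.haltT] with hPdef
  have hPseq : ∀ n, InstrSeqOver H''.iface (P n) := by
    intro n
    by_cases h : DerivedOp H'' (H'.op n)
    · simp only [hPdef, dif_pos h]
      exact h.choose_spec.1
    · simp only [hPdef, dif_neg h]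
      exact ⟨by simp, by intro u hu; simp at hu; subst hu; trivial⟩
  have hPexec : ∀ n ∈ H'.iface, ∀ s,
      Exec H'' (P n) 0 s ((H'.op n s).1) ((H'.op n s).2) := by
    intro n hn s
    have h := hder n hn
    simp only [hPdef, dif_pos h]
    exact h.choose_spec.2 s
  refine ⟨FUTrans.comp P x 0 x, ⟨?_, ?_⟩, ?_⟩
  · -- nonempty
    cases x with
    | nil => exact absurd rfl hxne
    | cons u rest =>
      have hB : FUTrans.B P (u :: rest) 0 u ≠ [] := by
        have hlen : (FUTrans.B P (u :: rest) 0 u).length = FUTrans.sz P u :=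
          FUTrans.B_length P (u :: rest) 0 u
        have hsz : 0 < FUTrans.sz P u := by
          cases u <;>
            simp only [FUTrans.sz] <;>
            first
            | exact Nat.one_pos
            | exact List.length_pos_iff.mpr (hPseq _).1
        intro hnil
        rw [hnil] at hlen
        simp at hlen
        omega
      simp only [FUTrans.comp]
      intro hnil
      exact hB (List.append_eq_nil_iff.mp hnil).1
  · -- names in H''.iface
    intro v hv
    obtain ⟨u, hu, j', hv'⟩ := FUTrans.mem_comp P x x 0 v hv
    cases u with
    | basic n =>
      obtain ⟨k, w, hw, hvw⟩ := FUTrans.mem_mapIdxFrom _ _ _ _ hv'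
      rw [hvw]
      exact FUTrans.tr_namesIn _ _ _ ((hPseq n).2 w hw)
    | postest n =>
      obtain ⟨k, w, hw, hvw⟩ := FUTrans.mem_mapIdxFrom _ _ _ _ hv'
      rw [hvw]
      exact FUTrans.tr_namesIn _ _ _ ((hPseq n).2 w hw)
    | negtest n =>
      obtain ⟨k, w, hw, hvw⟩ := FUTrans.mem_mapIdxFrom _ _ _ _ hv'
      rw [hvw]
      exact FUTrans.tr_namesIn _ _ _ ((hPseq n).2 w hw)
    | fjump l => simp only [FUTrans.B, List.mem_singleton] at hv'; subst hv'; trivial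
    | bjump l => simp only [FUTrans.B, List.mem_singleton] at hv'; subst hv'; trivial
    | haltT => simp only [FUTrans.B, List.mem_singleton] at hv'; subst hv'; trivial
    | haltF => simp only [FUTrans.B, List.mem_singleton] at hv'; subst hv'; trivial
  · -- execution
    intro s
    have := FUTrans.sim H' H'' P x hxnames hPexec (hxex s)
    simpa [FUTrans.pos] using this
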